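/- Let p be a positive integer, 2 ≤ C ≤ p-2, and H : {0,...,p-1} → {0,...,p-1} with H(i) ≡ H(0) + in (mod p). Define Ĥ(i) = [H(i + C) - C]_p (indices mod p). Then the condition (H(i) < C ⟺ i < C for all i) holds if and only if (Ĥ(i) < p - C ⟺ i < p - C for all i), and Ĥ(i) ≡ Ĥ(0) + in (mod p). -/

import Mathlib

/-- Reduction step: with `Ĥ i = [H ((i + C) % p) - C]_p`, the condition
`(H i < C ↔ i < C)` for all `i < p` holds iff `(Ĥ i < p - C ↔ i < p - C)` for
all `i < p`, and `Ĥ` is again affine mod `p` with the same slope `n`. -/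
theorem stmt_17 (p : ℕ) (hp : 0 < p) (C : ℕ) (hC : 2 ≤ C) (hC' : C ≤ p - 2)
    (H : ℕ → ℕ) (n : ℤ) (hHlt : ∀ i < p, H i < p)
    (hHcong : ∀ i < p, (H i : ℤ) ≡ (H 0 : ℤ) + i * n [ZMOD p]) :
    let Hhat : ℕ → ℕ := fun i => (((H ((i + C) % p) : ℤ) - (C : ℤ)) % (p : ℤ)).toNat
    ((∀ i < p, (H i < C ↔ i < C)) ↔ (∀ i < p, (Hhat i < p - C ↔ i < p - C))) ∧
    (∀ i < p, (Hhat i : ℤ) ≡ (Hhat 0 : ℤ) + i * n [ZMOD p]) := by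
  intro Hhat
  have hp4 : 4 ≤ p := by omega
  -- value formula for Hhat
  have key : ∀ i < p, (Hhat i : ℤ) =
      (H ((i + C) % p) : ℤ) - C + (if C ≤ H ((i + C) % p) then 0 else p) := by
    intro i hi
    have hj : (i + C) % p < p := Nat.mod_lt _ hp
    have hHj := hHlt _ hj
    simp only [Hhat]
    by_cases h : C ≤ H ((i + C) % p)
    · rw [if_pos h, Int.emod_eq_of_lt (by omega) (by push_cast; omega)]
      push_cast
      omega
    · rw [if_neg h]
      have h2 : ((H ((i + C) % p) : ℤ) - C) % p = ((H ((i + C) % p) : ℤ) - C + p) % p := (Int.add_emod_right _ _).symm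
      rw [h2, Int.emod_eq_of_lt (by push_cast; omega) (by push_cast; omega)]
      push_cast
      omega
  have A : ∀ i < p, (Hhat i < p - C ↔ C ≤ H ((i + C) % p)) := by
    intro i hi
    have hj : (i + C) % p < p := Nat.mod_lt _ hp
    have hHj := hHlt _ hj
    have hk := key i hi
    by_cases h : C ≤ H ((i + C) % p) <;> simp only [h, if_true, if_false] at hk <;> omega
  have B : ∀ i < p, (i < p - C ↔ C ≤ (i + C) % p) := by
    intro i hi
    rcases lt_or_ge i (p - C) with h | h
    · have : (i + C) % p = i + C := Nat.mod_eq_of_lt (by omega)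
      omega
    · have h1 : (i + C) % p = (i + C - p) % p := Nat.mod_eq_sub_mod (by omega)
      have h2 : (i + C - p) % p = i + C - p := Nat.mod_eq_of_lt (by omega)
      omega
  constructor
  · constructor
    · intro hH i hi
      have hj : (i + C) % p < p := Nat.mod_lt _ hp
      rw [A i hi, B i hi]
      have := hH _ hj
      omega
    · intro hH i hi
      set i' := (i + (p - C)) % p with hi'def
      have hi' : i' < p := Nat.mod_lt _ hp
      have heq : (i' + C) % p = i := by
        have h1 : (i' + C) % p = (i + (p - C) + C) % p := Nat.mod_add_mod _ _ _
        have h2 : i + (p - C) + C = i + p := by omega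
        rw [h1, h2, Nat.add_mod_right, Nat.mod_eq_of_lt hi]
      have hA := A i' hi'
      have hB := B i' hi'
      rw [heq] at hA hB
      have := hH i' hi'
      omega
  · -- congruence part
    have cong : ∀ i < p, (Hhat i : ℤ) ≡ (H 0 : ℤ) + ((i : ℤ) + C) * n - C [ZMOD p] := by
      intro i hi
      have hj : (i + C) % p < p := Nat.mod_lt _ hp
      have h1 : (Hhat i : ℤ) = ((H ((i + C) % p) : ℤ) - C) % p := by
        simp only [Hhat]
        exact Int.toNat_of_nonneg (Int.emod_nonneg _ (by exact_mod_cast (by omega : p ≠ 0)))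
      have h2 : (Hhat i : ℤ) ≡ (H ((i + C) % p) : ℤ) - C [ZMOD p] := by
        rw [h1]; exact Int.emod_emod_of_dvd _ dvd_rfl
      have h3 : (H ((i + C) % p) : ℤ) ≡ (H 0 : ℤ) + ((i + C) % p : ℕ) * n [ZMOD p] :=
        hHcong _ hj
      have h4 : (((i + C) % p : ℕ) : ℤ) ≡ (i : ℤ) + C [ZMOD p] := by
        have : (((i + C) % p : ℕ) : ℤ) = ((i + C : ℕ) : ℤ) % p := rfl
        rw [this]
        calc ((i + C : ℕ) : ℤ) % p ≡ ((i + C : ℕ) : ℤ) [ZMOD p] :=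
              Int.emod_emod_of_dvd _ dvd_rfl
          _ = (i : ℤ) + C := by push_cast; ring
      calc (Hhat i : ℤ) ≡ (H ((i + C) % p) : ℤ) - C [ZMOD p] := h2
        _ ≡ (H 0 : ℤ) + ((i + C) % p : ℕ) * n - C [ZMOD p] := h3.sub_right _
        _ ≡ (H 0 : ℤ) + ((i : ℤ) + C) * n - C [ZMOD p] :=
            (((h4.mul_right n).add_left _).sub_right _)
    intro i hi
    have h0 := cong 0 hp
    have hi2 := cong i hi
    calc (Hhat i : ℤ) ≡ (H 0 : ℤ) + ((i : ℤ) + C) * n - C [ZMOD p] := hi2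
      _ = ((H 0 : ℤ) + ((0 : ℤ) + C) * n - C) + i * n := by ring
      _ ≡ (Hhat 0 : ℤ) + i * n [ZMOD p] := by
          have := h0.symm.add_right ((i : ℤ) * n)
          simpa using this
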